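/- Let X = X₁ × ⋯ × X_n with |X_i| ≥ 2, let Λ be an inclusion-closed family of subsets of [n], and let A ∈ ℝ^{a×X} be a matrix whose rows span V_Λ(X). Then for every x ∈ X, the columns {A_{x'} : x' ∈ K(x,Λ)} of A indexed by the Λ-ball centered at x are linearly independent; in particular, rank(A_{K(x,Λ)}) = |K(x,Λ)| = K(Λ) = 1 + ∑_{λ∈Λ∖{∅}} ∏_{i∈λ}(|X_i|−1) = dim V_Λ(X). -/

import Mathlib

open scoped Classical BigOperators

/-- `V_Λ(X)`: the span of all functions on `X = ∏ i, X_i` that depend only on the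
coordinates `x_λ` for some `λ ∈ Λ`. -/
noncomputable def VLam (n : ℕ) (q : Fin n → ℕ) (Λ : Finset (Finset (Fin n))) :
    Submodule ℝ ((∀ i, Fin (q i)) → ℝ) :=
  Submodule.span ℝ
    {f : (∀ i, Fin (q i)) → ℝ | ∃ s ∈ Λ,
      ∀ x x' : ∀ i, Fin (q i), (∀ i ∈ s, x i = x' i) → f x = f x'}


namespace LBAux

variable {n : ℕ} {q : Fin n → ℕ}

/-- difference set -/
noncomputable def dif (x x' : ∀ i, Fin (q i)) : Finset (Fin n) :=
  Finset.univ.filter (fun i => x' i ≠ x i)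

/-- indicator of agreement with x' on dif x x' -/
noncomputable def gdel (x x' : ∀ i, Fin (q i)) : (∀ i, Fin (q i)) → ℝ :=
  fun y => ∏ i ∈ dif x x', if y i = x' i then (1:ℝ) else 0

lemma gdel_self (x u : ∀ i, Fin (q i)) : gdel x u u = 1 :=
  Finset.prod_eq_one fun _ _ => if_pos rfl

lemma dif_self (x : ∀ i, Fin (q i)) : dif x x = ∅ := by
  simp [dif]

lemma eq_of_gdel_ne_zero {x u v : ∀ i, Fin (q i)} (h : gdel x u v ≠ 0)
    (hc : (dif x v).card ≤ (dif x u).card) : v = u := by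
  have hfac : ∀ i ∈ dif x u, v i = u i := by
    intro i hi
    have := (Finset.prod_ne_zero_iff.1 h) i hi
    by_contra hne
    exact this (if_neg hne)
  have hsub : dif x u ⊆ dif x v := by
    intro i hi
    have hiu : u i ≠ x i := (Finset.mem_filter.1 hi).2
    exact Finset.mem_filter.2 ⟨Finset.mem_univ _, by rw [hfac i hi]; exact hiu⟩
  have heq : dif x u = dif x v := Finset.eq_of_subset_of_card_le hsub hc
  funext i
  by_cases hi : i ∈ dif x u
  · exact hfac i hi
  · have h1 : u i = x i := not_not.1 fun hne =>
      hi (Finset.mem_filter.2 ⟨Finset.mem_univ _, hne⟩)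
    have h2 : v i = x i := not_not.1 fun hne =>
      (heq ▸ hi) (Finset.mem_filter.2 ⟨Finset.mem_univ _, hne⟩)
    rw [h1, h2]

lemma gdel_mem (x u : ∀ i, Fin (q i)) {Λ : Finset (Finset (Fin n))}
    (h : dif x u ∈ Λ) : gdel x u ∈ VLam n q Λ :=
  Submodule.subset_span ⟨dif x u, h, fun y y' hyy =>
    Finset.prod_congr rfl fun i hi => by rw [hyy i hi]⟩

/-- generators with difference set contained in `s` -/
noncomputable def Gs (x : ∀ i, Fin (q i)) (s : Finset (Fin n)) : Set ((∀ i, Fin (q i)) → ℝ) :=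
  gdel x '' {u | dif x u ⊆ s}

lemma Gs_mono (x : ∀ i, Fin (q i)) {s t : Finset (Fin n)} (h : s ⊆ t) :
    Gs x s ⊆ Gs x t :=
  Set.image_mono fun u hu => hu.trans h

lemma dif_update {x u : ∀ i, Fin (q i)} {j : Fin n} {b : Fin (q j)} (hb : b ≠ x j)
    (hj : j ∉ dif x u) :
    dif x (Function.update u j b) = insert j (dif x u) := by
  ext i
  by_cases hij : i = j
  · subst hij
    simp [dif, Function.update_self, hb]
  · simp only [dif, Finset.mem_filter, Finset.mem_univ, true_and, Finset.mem_insert,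
      Function.update_of_ne hij]
    tauto

lemma gdel_update {x u : ∀ i, Fin (q i)} {j : Fin n} {b : Fin (q j)} (hb : b ≠ x j)
    (hj : j ∉ dif x u) :
    gdel x (Function.update u j b) =
      (fun y : ∀ i, Fin (q i) => if y j = b then (1:ℝ) else 0) * gdel x u := by
  funext y
  rw [Pi.mul_apply, gdel, gdel, dif_update hb hj, Finset.prod_insert hj,
    Function.update_self]
  congr 1
  exact Finset.prod_congr rfl fun i hi => by
    rw [Function.update_of_ne (ne_of_mem_of_not_mem hi hj)]

lemma mul_indicator_mem (x : ∀ i, Fin (q i)) {j : Fin n} {b : Fin (q j)} (hb : b ≠ x j)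
    {s : Finset (Fin n)} (hj : j ∉ s) {p : (∀ i, Fin (q i)) → ℝ}
    (hp : p ∈ Submodule.span ℝ (Gs x s)) :
    (fun y : ∀ i, Fin (q i) => if y j = b then (1:ℝ) else 0) * p ∈ Submodule.span ℝ (Gs x (insert j s)) := by
  induction hp using Submodule.span_induction with
  | mem g hg =>
      obtain ⟨u, hu, rfl⟩ := hg
      rw [← gdel_update hb (fun h => hj (hu h))]
      exact Submodule.subset_span ⟨Function.update u j b, by
        show dif x (Function.update u j b) ⊆ insert j s
        rw [dif_update hb (fun h => hj (hu h))]
        exact Finset.insert_subset_insert _ hu, rfl⟩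
  | zero => rw [mul_zero]; exact Submodule.zero_mem _
  | add y z hy hz hy' hz' => rw [mul_add]; exact Submodule.add_mem _ hy' hz'
  | smul a y hy hy' => rw [mul_smul_comm]; exact Submodule.smul_mem _ _ hy'

lemma e_mem_span (x : ∀ i, Fin (q i)) (s : Finset (Fin n)) (c : ∀ i, Fin (q i)) :
    (fun y => ∏ i ∈ s, if y i = c i then (1:ℝ) else 0) ∈ Submodule.span ℝ (Gs x s) := by
  induction s using Finset.induction_on with
  | empty =>
      have : (fun (y : ∀ i, Fin (q i)) => ∏ i ∈ (∅ : Finset (Fin n)),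
          if y i = c i then (1:ℝ) else 0) = gdel x x := by
        funext y
        simp [gdel, dif_self]
      rw [this]
      exact Submodule.subset_span ⟨x, by show dif x x ⊆ ∅; rw [dif_self], rfl⟩
  | @insert j s hj IH =>
      have hsplit : (fun y : ∀ i, Fin (q i) => ∏ i ∈ insert j s, if y i = c i then (1:ℝ) else 0) =
          (fun y : ∀ i, Fin (q i) => if y j = c j then (1:ℝ) else 0) *
            (fun y : ∀ i, Fin (q i) => ∏ i ∈ s, if y i = c i then (1:ℝ) else 0) := by
        funext y
        rw [Pi.mul_apply, Finset.prod_insert hj]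
      rw [hsplit]
      by_cases hcj : c j = x j
      · have hid : (fun (y : ∀ i, Fin (q i)) => if y j = c j then (1:ℝ) else 0) =
            (1 : (∀ i, Fin (q i)) → ℝ) -
              ∑ b ∈ Finset.univ.erase (x j), (fun y : ∀ i, Fin (q i) => if y j = b then (1:ℝ) else 0) := by
          funext y
          rw [Pi.sub_apply, Pi.one_apply, Finset.sum_apply]
          have : ∑ b ∈ Finset.univ.erase (x j), (if y j = b then (1:ℝ) else 0) =
              if y j ∈ Finset.univ.erase (x j) then (1:ℝ) else 0 := by
            rw [Finset.sum_ite_eq]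
          rw [this, hcj]
          by_cases hy : y j = x j
          · simp [hy]
          · simp [hy, Finset.mem_erase]
        rw [hid, sub_mul, one_mul, Finset.sum_mul]
        refine Submodule.sub_mem _ (Submodule.span_mono (Gs_mono x (Finset.subset_insert j s)) IH)
          (Submodule.sum_mem _ fun b hb => ?_)
        exact mul_indicator_mem x (Finset.mem_erase.1 hb).1 hj IH
      · exact mul_indicator_mem x hcj hj IH

/-- any function depending only on coordinates in `s` decomposes over delta products -/
lemma generator_decomp (x : ∀ i, Fin (q i)) (s : Finset (Fin n))
    (f : (∀ i, Fin (q i)) → ℝ)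
    (hf : ∀ y y' : ∀ i, Fin (q i), (∀ i ∈ s, y i = y' i) → f y = f y') :
    f = ∑ c ∈ Fintype.piFinset (fun i => if i ∈ s then (Finset.univ : Finset (Fin (q i))) else {x i}),
        f c • (fun y : ∀ i, Fin (q i) => ∏ i ∈ s, if y i = c i then (1:ℝ) else 0) := by
  funext y
  rw [Finset.sum_apply]
  set c₀ : ∀ i, Fin (q i) := fun i => if h : i ∈ s then y i else x i with hc₀
  have hc₀mem : c₀ ∈ Fintype.piFinset
      (fun i => if i ∈ s then (Finset.univ : Finset (Fin (q i))) else {x i}) := by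
    rw [Fintype.mem_piFinset]
    intro i
    by_cases hi : i ∈ s <;> simp [hc₀, hi]
  rw [Finset.sum_eq_single c₀]
  · have h1 : (∏ i ∈ s, if y i = c₀ i then (1:ℝ) else 0) = 1 := by
      refine Finset.prod_eq_one fun i hi => ?_
      simp [hc₀, hi]
    simp only [Pi.smul_apply, smul_eq_mul]
    rw [h1, mul_one]
    exact (hf c₀ y fun i hi => by simp [hc₀, hi]).symm
  · intro c hc hne
    simp only [Pi.smul_apply, smul_eq_mul]
    have : ∃ i ∈ s, y i ≠ c i := by
      by_contra hcon
      push_neg at hcon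
      apply hne
      funext i
      by_cases hi : i ∈ s
      · rw [← hcon i hi]; simp [hc₀, hi]
      · have := Fintype.mem_piFinset.1 hc i
        rw [if_neg hi, Finset.mem_singleton] at this
        rw [this]; simp [hc₀, hi]
    obtain ⟨i, hi, hne'⟩ := this
    have hz : (∏ i ∈ s, if y i = c i then (1:ℝ) else 0) = 0 :=
      Finset.prod_eq_zero hi (if_neg hne')
    rw [hz, mul_zero]
  · intro h; exact absurd hc₀mem h

lemma span_G_eq (x : ∀ i, Fin (q i)) (Λ : Finset (Finset (Fin n)))
    (hΛ : ∀ s ∈ Λ, ∀ t ⊆ s, t ∈ Λ) :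
    Submodule.span ℝ (gdel x '' {u | dif x u ∈ Λ}) = VLam n q Λ := by
  apply le_antisymm
  · rw [Submodule.span_le]
    rintro g ⟨u, hu, rfl⟩
    exact gdel_mem x u hu
  · rw [VLam, Submodule.span_le]
    rintro f ⟨s, hs, hf⟩
    rw [generator_decomp x s f hf]
    refine Submodule.sum_mem _ fun c _ => Submodule.smul_mem _ _ ?_
    have h1 : (fun y : ∀ i, Fin (q i) => ∏ i ∈ s, if y i = c i then (1:ℝ) else 0) ∈
        Submodule.span ℝ (Gs x s) := e_mem_span x s c
    refine Submodule.span_mono ?_ h1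
    rintro g ⟨u, hu, rfl⟩
    exact ⟨u, hΛ s hs (dif x u) hu, rfl⟩

/-- the gdel family indexed by the ball is linearly independent (as functions) -/
lemma gdel_li (x : ∀ i, Fin (q i)) (Λ : Finset (Finset (Fin n))) :
    LinearIndependent ℝ (fun u : {x' : ∀ i, Fin (q i) | dif x x' ∈ Λ} => gdel x u.1) := by
  rw [Fintype.linearIndependent_iff]
  intro c hc
  by_contra hcon
  push_neg at hcon
  obtain ⟨u₁, hu₁⟩ := hcon
  have hS : (Finset.univ.filter (fun u : {x' : ∀ i, Fin (q i) | dif x x' ∈ Λ} => c u ≠ 0)).Nonempty :=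
    ⟨u₁, Finset.mem_filter.2 ⟨Finset.mem_univ _, hu₁⟩⟩
  obtain ⟨u₀, hu₀mem, hu₀min⟩ := Finset.exists_min_image _ (fun u => (dif x u.1).card) hS
  have hu₀ : c u₀ ≠ 0 := (Finset.mem_filter.1 hu₀mem).2
  have heval := congrFun hc u₀.1
  rw [Finset.sum_apply, Pi.zero_apply] at heval
  rw [Finset.sum_eq_single u₀] at heval
  · rw [Pi.smul_apply, gdel_self, smul_eq_mul, mul_one] at heval
    exact hu₀ heval
  · intro u _ hne
    rw [Pi.smul_apply, smul_eq_mul]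
    by_cases hcu : c u = 0
    · rw [hcu, zero_mul]
    · have hg : gdel x u.1 u₀.1 = 0 := by
        by_contra hgne
        have hcard : (dif x u₀.1).card ≤ (dif x u.1).card :=
          hu₀min u (Finset.mem_filter.2 ⟨Finset.mem_univ _, hcu⟩)
        exact hne (Subtype.ext (eq_of_gdel_ne_zero hgne hcard)).symm
      rw [hg, mul_zero]
  · intro h; exact absurd (Finset.mem_univ u₀) h

/-- linear independence of the evaluation functionals at ball points on VLam -/
lemma eval_indep (x : ∀ i, Fin (q i)) (Λ : Finset (Finset (Fin n)))
    (c : {x' : ∀ i, Fin (q i) | dif x x' ∈ Λ} → ℝ)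
    (hzero : ∀ f ∈ VLam n q Λ, ∑ u, c u * f u.1 = 0) :
    ∀ u, c u = 0 := by
  by_contra hcon
  push_neg at hcon
  obtain ⟨u₁, hu₁⟩ := hcon
  have hS : (Finset.univ.filter (fun u : {x' : ∀ i, Fin (q i) | dif x x' ∈ Λ} => c u ≠ 0)).Nonempty :=
    ⟨u₁, Finset.mem_filter.2 ⟨Finset.mem_univ _, hu₁⟩⟩
  obtain ⟨u₀, hu₀mem, hu₀max⟩ := Finset.exists_max_image _ (fun u => (dif x u.1).card) hS
  have hu₀ : c u₀ ≠ 0 := (Finset.mem_filter.1 hu₀mem).2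
  have heval := hzero (gdel x u₀.1) (gdel_mem x u₀.1 u₀.2)
  rw [Finset.sum_eq_single u₀] at heval
  · rw [gdel_self, mul_one] at heval
    exact hu₀ heval
  · intro u _ hne
    by_cases hcu : c u = 0
    · rw [hcu, zero_mul]
    · have hg : gdel x u₀.1 u.1 = 0 := by
        by_contra hgne
        have hcard : (dif x u.1).card ≤ (dif x u₀.1).card :=
          hu₀max u (Finset.mem_filter.2 ⟨Finset.mem_univ _, hcu⟩)
        exact hne (Subtype.ext (eq_of_gdel_ne_zero hgne hcard))
      rw [hg, mul_zero]
  · intro h; exact absurd (Finset.mem_univ u₀) h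

/-- dimension of VLam equals the size of the ball -/
lemma finrank_VLam (x : ∀ i, Fin (q i)) (Λ : Finset (Finset (Fin n)))
    (hΛ : ∀ s ∈ Λ, ∀ t ⊆ s, t ∈ Λ) :
    Module.finrank ℝ (VLam n q Λ) =
      Fintype.card {x' : ∀ i, Fin (q i) | dif x x' ∈ Λ} := by
  set Kset := {x' : ∀ i, Fin (q i) | dif x x' ∈ Λ}
  have hmem : ∀ u : Kset, gdel x u.1 ∈ VLam n q Λ := fun u => gdel_mem x u.1 u.2
  set fam : Kset → VLam n q Λ := fun u => ⟨gdel x u.1, hmem u⟩ with hfam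
  have hli : LinearIndependent ℝ fam := by
    have := gdel_li x Λ
    have hcomp : (fun u : Kset => gdel x u.1) = (VLam n q Λ).subtype ∘ fam := rfl
    rw [hcomp] at this
    exact LinearIndependent.of_comp _ this
  have hspan : ⊤ ≤ Submodule.span ℝ (Set.range fam) := by
    have hmap : Submodule.map (VLam n q Λ).subtype (Submodule.span ℝ (Set.range fam)) =
        Submodule.map (VLam n q Λ).subtype ⊤ := by
      rw [Submodule.map_span, Submodule.map_top, Submodule.range_subtype]
      have : (VLam n q Λ).subtype '' Set.range fam = gdel x '' Kset := by
        rw [← Set.range_comp]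
        rw [Set.image_eq_range]
        rfl
      rw [this, span_G_eq x Λ hΛ]
    have := Submodule.map_injective_of_injective (VLam n q Λ).injective_subtype hmap
    rw [this]
  exact Module.finrank_eq_card_basis (Module.Basis.mk hli hspan)

lemma card_ball (x : ∀ i, Fin (q i)) (Λ : Finset (Finset (Fin n))) :
    (Finset.univ.filter (fun x' : ∀ i, Fin (q i) => dif x x' ∈ Λ)).card =
      ∑ s ∈ Λ, ∏ i ∈ s, (q i - 1) := by
  rw [Finset.card_eq_sum_card_fiberwise
    (s := Finset.univ.filter (fun x' : ∀ i, Fin (q i) => dif x x' ∈ Λ)) (f := fun x' => dif x x') (t := Λ) (fun x' hx' => (Finset.mem_filter.1 hx').2)]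
  refine Finset.sum_congr rfl fun s hs => ?_
  have h1 : Finset.filter (fun x' => dif x x' = s)
      (Finset.univ.filter (fun x' : ∀ i, Fin (q i) => dif x x' ∈ Λ)) =
      Fintype.piFinset (fun i => if i ∈ s then Finset.univ.erase (x i) else {x i}) := by
    ext x'
    simp only [Finset.mem_filter, Finset.mem_univ, true_and, Fintype.mem_piFinset]
    constructor
    · rintro ⟨-, hdif⟩
      intro i
      by_cases hi : i ∈ s
      · rw [if_pos hi]
        refine Finset.mem_erase.2 ⟨?_, Finset.mem_univ _⟩
        have hmem : i ∈ dif x x' := hdif ▸ hi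
        exact (Finset.mem_filter.1 hmem).2
      · rw [if_neg hi, Finset.mem_singleton]
        by_contra hne
        exact hi (hdif ▸ (Finset.mem_filter.2 ⟨Finset.mem_univ _, hne⟩))
    · intro h
      have hdif : dif x x' = s := by
        ext i
        simp only [dif, Finset.mem_filter, Finset.mem_univ, true_and]
        constructor
        · intro hne
          by_contra hi
          have hh := h i
          rw [if_neg hi, Finset.mem_singleton] at hh
          exact hne hh
        · intro hi
          have hh := h i
          rw [if_pos hi] at hh
          exact (Finset.mem_erase.1 hh).1
      exact ⟨hdif ▸ hs, hdif⟩
  rw [h1, Fintype.card_piFinset]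
  have h2 : ∀ i : Fin n,
      ((if i ∈ s then Finset.univ.erase (x i) else {x i}).card) =
        if i ∈ s then q i - 1 else 1 := by
    intro i
    by_cases hi : i ∈ s
    · rw [if_pos hi, if_pos hi, Finset.card_erase_of_mem (Finset.mem_univ _),
        Finset.card_univ, Fintype.card_fin]
    · rw [if_neg hi, if_neg hi, Finset.card_singleton]
  rw [Finset.prod_congr rfl fun i _ => h2 i, Finset.prod_ite_mem, Finset.univ_inter]

end LBAux

open LBAux

/-- If the rows of `A` span `V_Λ(X)`, then for every `x` the columns of
`A` indexed by the `Λ`-ball `K(x,Λ) = {x' : {i : x'_i ≠ x_i} ∈ Λ}` are linearly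
independent; in particular `rank(A_{K(x,Λ)}) = |K(x,Λ)| = 1 + ∑_{λ∈Λ∖{∅}} ∏_{i∈λ}(|X_i|−1)
= dim V_Λ(X)`. -/
theorem lambda_ball_columns_linearIndependent
    (n : ℕ) (q : Fin n → ℕ) (hq : ∀ i, 2 ≤ q i)
    (Λ : Finset (Finset (Fin n))) (hempty : ∅ ∈ Λ)
    (hΛ : ∀ s ∈ Λ, ∀ t ⊆ s, t ∈ Λ)
    (a : ℕ) (A : Matrix (Fin a) (∀ i, Fin (q i)) ℝ)
    (hA : Submodule.span ℝ (Set.range A) = VLam n q Λ)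
    (x : ∀ i, Fin (q i))
    (K : Set (∀ i, Fin (q i)))
    (hK : K = {x' | Finset.univ.filter (fun i => x' i ≠ x i) ∈ Λ}) :
    LinearIndependent ℝ (fun x' : K => fun i => A i x') ∧
    Module.finrank ℝ (Submodule.span ℝ ((fun x' => fun i => A i x') '' K)) = Nat.card K ∧
    Nat.card K = 1 + ∑ s ∈ Λ.erase ∅, ∏ i ∈ s, (q i - 1) ∧
    Nat.card K = Module.finrank ℝ (VLam n q Λ) := by
  subst hK
  have hKset : {x' : ∀ i, Fin (q i) | Finset.univ.filter (fun i => x' i ≠ x i) ∈ Λ} =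
      {x' : ∀ i, Fin (q i) | dif x x' ∈ Λ} := rfl
  rw [hKset]
  have part1 : LinearIndependent ℝ
      (fun x' : {x' : ∀ i, Fin (q i) | dif x x' ∈ Λ} => fun i => A i x'.1) := by
    rw [Fintype.linearIndependent_iff]
    intro c hc
    apply eval_indep x Λ c
    intro f hf
    rw [← hA] at hf
    induction hf using Submodule.span_induction with
    | mem f hfm =>
        obtain ⟨i, rfl⟩ := hfm
        have hrow := congrFun hc i
        simp only [Finset.sum_apply, Pi.smul_apply, smul_eq_mul, Pi.zero_apply] at hrow
        exact hrow
    | zero => simp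
    | add f g hf hg hf' hg' =>
        simp only [Pi.add_apply, mul_add, Finset.sum_add_distrib, hf', hg', add_zero]
    | smul a f hf hf' =>
        simp only [Pi.smul_apply, smul_eq_mul, mul_left_comm]
        rw [← Finset.mul_sum, hf', mul_zero]
  refine ⟨part1, ?_, ?_, ?_⟩
  · rw [Set.image_eq_range, finrank_span_eq_card part1, Nat.card_eq_fintype_card]
  · rw [Nat.card_eq_fintype_card, Fintype.card_subtype]
    have hfe : (Finset.univ.filter
        (fun x'' : ∀ i, Fin (q i) => x'' ∈ {x' : ∀ i, Fin (q i) | dif x x' ∈ Λ})) =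
        (Finset.univ.filter (fun x' : ∀ i, Fin (q i) => dif x x' ∈ Λ)) := rfl
    rw [hfe, card_ball x Λ, ← Finset.add_sum_erase Λ _ hempty, Finset.prod_empty]
  · rw [Nat.card_eq_fintype_card, finrank_VLam x Λ hΛ]
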